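/- Let f : ℝ → ℝ be C², convex, with f(0) > 0, f' ≥ 0, f(t)/t → +∞ as t → +∞, and suppose the limit L := lim_{t→+∞} f(t)f''(t)/f'(t)² exists. Then L ∈ [0,1]. -/

import Mathlib

open Filter

/-- A monotone function has nonnegative derivative at every point of
differentiability. -/
lemma monotone_deriv_nonneg_aux {g : ℝ → ℝ} (hg : Monotone g) {x : ℝ}
    (hd : DifferentiableAt ℝ g x) : 0 ≤ deriv g x := by
  have h := hasDerivAt_iff_tendsto_slope.mp hd.hasDerivAt
  refine ge_of_tendsto h ?_
  filter_upwards [self_mem_nhdsWithin] with y hy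
  have hy' : y ≠ x := hy
  rw [slope_def_field]
  rw [div_nonneg_iff]
  rcases lt_or_gt_of_ne hy' with h1 | h1
  · right
    constructor
    · simpa using hg h1.le
    · linarith
  · left
    constructor
    · simpa using hg h1.le
    · linarith

/-- If f is C², convex, with f(0) > 0, f' ≥ 0, superlinear at +∞, and the limit
L of f f''/(f')² at +∞ exists, then L ∈ [0,1]. -/
theorem limit_ff''_over_f'sq_in_unit_interval (f : ℝ → ℝ) (L : ℝ)
    (hf : ContDiff ℝ 2 f) (hconv : ConvexOn ℝ Set.univ f)
    (hf0 : 0 < f 0) (hf' : ∀ t : ℝ, 0 ≤ deriv f t)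
    (hsuper : Tendsto (fun t => f t / t) atTop atTop)
    (hlim : Tendsto (fun t => f t * deriv (deriv f) t / (deriv f t) ^ 2)
      atTop (nhds L)) :
    L ∈ Set.Icc (0 : ℝ) 1 := by
  have hdiff : Differentiable ℝ f := hf.differentiable (by norm_num)
  have hcd1 : ContDiff ℝ 1 (deriv f) := by
    have h2 : ContDiff ℝ (1 + 1 : ℕ) f := by exact_mod_cast hf
    exact (contDiff_succ_iff_deriv.mp (by exact_mod_cast h2)).2.2
  have hdiff' : Differentiable ℝ (deriv f) := hcd1.differentiable (by norm_num)
  -- deriv f is monotone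
  have hmono' : Monotone (deriv f) := by
    have := hconv.monotoneOn_deriv (fun x _ => hdiff x)
    intro x y hxy
    exact this (Set.mem_univ x) (Set.mem_univ y) hxy
  -- f'' ≥ 0
  have h2nn : ∀ t, 0 ≤ deriv (deriv f) t :=
    fun t => monotone_deriv_nonneg_aux hmono' (hdiff' t)
  -- f is monotone, hence f > 0 on [0,∞)
  have hfmono : Monotone f := monotone_of_deriv_nonneg hdiff hf'
  have hfpos : ∀ t : ℝ, 0 ≤ t → 0 < f t := fun t ht => lt_of_lt_of_le hf0 (hfmono ht)
  -- deriv f tends to atTop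
  have hdtop : Tendsto (deriv f) atTop atTop := by
    have hslope : Tendsto (fun t => f t / t - f 0) atTop atTop := by
      simpa [sub_eq_add_neg] using tendsto_atTop_add_const_right atTop (-(f 0)) hsuper
    refine tendsto_atTop_mono' atTop ?_ hslope
    filter_upwards [eventually_ge_atTop (1 : ℝ)] with t ht
    have ht0 : (0 : ℝ) < t := by linarith
    have hsl := hconv.slope_le_deriv (Set.mem_univ 0) (Set.mem_univ t) ht0 (hdiff t)
    rw [slope_def_field, sub_zero] at hsl
    have h1 : f 0 / t ≤ f 0 := by
      rw [div_le_iff₀ ht0]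
      nlinarith [hf0.le]
    have h2 : (f t - f 0) / t = f t / t - f 0 / t := by ring
    rw [h2] at hsl
    linarith
  -- eventually deriv f > 0
  have hdpos : ∀ᶠ t in atTop, 0 < deriv f t := hdtop.eventually_gt_atTop 0
  constructor
  · -- L ≥ 0 : quotient eventually nonneg
    refine ge_of_tendsto hlim ?_
    filter_upwards [eventually_ge_atTop (0 : ℝ)] with t ht
    exact div_nonneg (mul_nonneg (hfpos t ht).le (h2nn t)) (sq_nonneg _)
  · -- L ≤ 1
    by_contra hL
    push_neg at hL
    set c : ℝ := (L - 1) / 2 with hc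
    have hcpos : 0 < c := by simp [hc]; linarith
    -- eventually the quotient is ≥ 1 + c
    have hq : ∀ᶠ t in atTop,
        1 + c ≤ f t * deriv (deriv f) t / (deriv f t) ^ 2 := by
      have : ∀ᶠ t in atTop,
          f t * deriv (deriv f) t / (deriv f t) ^ 2 ∈ Set.Ioi (1 + c) := by
        apply hlim.eventually (Ioi_mem_nhds ?_)
        simp only [hc]; linarith
      filter_upwards [this] with t ht using le_of_lt ht
    obtain ⟨a, ha⟩ := ((hq.and hdpos).and (eventually_ge_atTop (0 : ℝ))).exists_forall_of_atTop
    have hda : ∀ t ∈ Set.Ici a, 0 < deriv f t := fun t ht =>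
      lt_of_lt_of_le ((ha a le_rfl).1.2 : 0 < deriv f a) (hmono' ht)
    set g : ℝ → ℝ := fun t => f t / deriv f t with hg
    have hgdiff : ∀ t ∈ Set.Ici a, DifferentiableAt ℝ g t := fun t ht =>
      (hdiff t).div (hdiff' t) (hda t ht).ne'
    have hgderiv : ∀ t ∈ Set.Ioi a, deriv g t ≤ -c := by
      intro t ht
      have ht' : t ∈ Set.Ici a := Set.mem_Ici.mpr (le_of_lt ht)
      have hd0 : deriv f t ≠ 0 := (hda t ht').ne'
      have : deriv g t =
          (deriv f t * deriv f t - f t * deriv (deriv f) t) / (deriv f t) ^ 2 :=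
        deriv_div (hdiff t) (hdiff' t) hd0
      rw [this]
      have hq' := (ha t ht').1.1
      have hsq : (0 : ℝ) < (deriv f t) ^ 2 := by positivity
      rw [div_le_iff₀ hsq]
      rw [le_div_iff₀ hsq] at hq'
      have hdd : deriv f t * deriv f t = deriv f t ^ 2 := (sq _).symm
      nlinarith
    -- mean value: g y - g a ≤ -c (y - a) on [a, ∞)
    have hmv : ∀ y, a ≤ y → g y - g a ≤ -c * (y - a) := by
      intro y hy
      refine (convex_Ici a).image_sub_le_mul_sub_of_deriv_le ?_ ?_ ?_ a Set.self_mem_Ici y (Set.mem_Ici.mpr hy) hy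
      · exact fun t ht => (hgdiff t ht).continuousAt.continuousWithinAt
      · intro t ht
        rw [interior_Ici] at ht
        exact (hgdiff t (Set.mem_Ici.mpr (le_of_lt ht))).differentiableWithinAt
      · intro t ht
        rw [interior_Ici] at ht
        exact hgderiv t ht
    -- choose y large enough to get a contradiction
    set y : ℝ := a + (g a + 1) / c with hy
    have hga : 0 ≤ g a := div_nonneg (hfpos a (ha a le_rfl).2).le (hda a Set.self_mem_Ici).le
    have hya : a ≤ y := by
      have h0 : 0 ≤ (g a + 1) / c := div_nonneg (by linarith) hcpos.le
      rw [hy]; linarith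
    have h1 := hmv y hya
    have h2 : -c * (y - a) = -(g a + 1) := by
      rw [hy]
      field_simp
      ring
    rw [h2] at h1
    have hgy : 0 < g y := div_pos (hfpos y (le_trans (ha a le_rfl).2 hya)) (hda y (Set.mem_Ici.mpr hya))
    linarith
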